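/- In ℝ² with K = ℝ²₊, let A₁ be the triangle with vertices (0,0), (−1,0), (−1/2,−1/2), A₂ the triangle with vertices (0,0), (−1/2,−1/2), (0,−1), B₁ the triangle with vertices (0,0), (−3/4,0), (0,−3/4), and B₂ the trapezium with vertices (−1,0), (−3/4,0), (0,−3/4), (0,−1). Then A₁ ∪ A₂ = B₁ ∪ B₂ (so (B₁ ∪ B₂) ⊆ (A₁ ∪ A₂) + K), yet B_i ⊄ A_j + K for all i, j ∈ {1,2}. In particular, the relation ≤_K^l between the unions holds while the relation ≤_K^L between the indexed families fails. -/

import Mathlib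

open Set Pointwise

noncomputable def K3 : Set (ℝ × ℝ) := {p | 0 ≤ p.1 ∧ 0 ≤ p.2}
noncomputable def A3₁ : Set (ℝ × ℝ) := convexHull ℝ {((0:ℝ), (0:ℝ)), (-1, 0), (-(1/2), -(1/2))}
noncomputable def A3₂ : Set (ℝ × ℝ) := convexHull ℝ {((0:ℝ), (0:ℝ)), (-(1/2), -(1/2)), (0, -1)}
noncomputable def B3₁ : Set (ℝ × ℝ) := convexHull ℝ {((0:ℝ), (0:ℝ)), (-(3/4), 0), (0, -(3/4))}
noncomputable def B3₂ : Set (ℝ × ℝ) :=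
  convexHull ℝ {((-1:ℝ), (0:ℝ)), (-(3/4), 0), (0, -(3/4)), (0, -1)}

lemma mem_hull3 (v0 v1 v2 p : ℝ × ℝ) (c0 c1 c2 : ℝ)
    (h0 : 0 ≤ c0) (h1 : 0 ≤ c1) (h2 : 0 ≤ c2) (hs : c0 + c1 + c2 = 1)
    (hp : c0 • v0 + c1 • v1 + c2 • v2 = p) :
    p ∈ convexHull ℝ ({v0, v1, v2} : Set (ℝ × ℝ)) := by
  have h := Finset.centerMass_mem_convexHull (Finset.univ : Finset (Fin 3))
    (w := ![c0,c1,c2]) (z := ![v0,v1,v2]) (s := ({v0, v1, v2} : Set (ℝ × ℝ)))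
    (fun i _ => by fin_cases i <;> simpa)
    (by simp [Fin.sum_univ_three]; linarith)
    (fun i _ => by fin_cases i <;> simp)
  rw [Finset.centerMass, Fin.sum_univ_three, Fin.sum_univ_three] at h
  simp only [Matrix.cons_val_zero, Matrix.cons_val_one, Matrix.head_cons,
    Matrix.cons_val_two, Matrix.tail_cons] at h
  rw [hs] at h
  simpa [hp] using h

lemma mem_hull4 (v0 v1 v2 v3 p : ℝ × ℝ) (c0 c1 c2 c3 : ℝ)
    (h0 : 0 ≤ c0) (h1 : 0 ≤ c1) (h2 : 0 ≤ c2) (h3 : 0 ≤ c3) (hs : c0 + c1 + c2 + c3 = 1)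
    (hp : c0 • v0 + c1 • v1 + c2 • v2 + c3 • v3 = p) :
    p ∈ convexHull ℝ ({v0, v1, v2, v3} : Set (ℝ × ℝ)) := by
  have h := Finset.centerMass_mem_convexHull (Finset.univ : Finset (Fin 4))
    (w := ![c0,c1,c2,c3]) (z := ![v0,v1,v2,v3]) (s := ({v0, v1, v2, v3} : Set (ℝ × ℝ)))
    (fun i _ => by fin_cases i <;> simpa)
    (by simp [Fin.sum_univ_four]; linarith)
    (fun i _ => by fin_cases i <;> simp)
  rw [Finset.centerMass, Fin.sum_univ_four, Fin.sum_univ_four] at h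
  simp only [Matrix.cons_val_zero, Matrix.cons_val_one, Matrix.head_cons,
    Matrix.cons_val_two, Matrix.tail_cons, Matrix.cons_val_three] at h
  rw [hs] at h
  simpa [hp] using h

noncomputable def T3 : Set (ℝ × ℝ) := {p | p.1 ≤ 0 ∧ p.2 ≤ 0 ∧ -1 ≤ p.1 + p.2}

lemma convex_T3 : Convex ℝ T3 := by
  intro x hx y hy a b ha hb hab
  obtain ⟨hx1, hx2, hx3⟩ := hx
  obtain ⟨hy1, hy2, hy3⟩ := hy
  refine ⟨?_, ?_, ?_⟩ <;> simp only [Prod.fst_add, Prod.snd_add, Prod.smul_fst, Prod.smul_snd,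
    smul_eq_mul] <;> nlinarith

lemma hull_subset_T3 {s : Set (ℝ × ℝ)} (h : s ⊆ T3) : convexHull ℝ s ⊆ T3 :=
  convexHull_min h convex_T3

lemma hAT : A3₁ ∪ A3₂ = T3 := by
  apply Subset.antisymm
  · apply union_subset
    · exact hull_subset_T3 (by rintro p (rfl | rfl | rfl) <;> constructor <;> norm_num)
    · exact hull_subset_T3 (by rintro p (rfl | rfl | rfl) <;> constructor <;> norm_num)
  · rintro ⟨x, y⟩ ⟨hx, hy, hs⟩
    simp only [mem_setOf_eq] at hx hy hs
    rcases le_total x y with h | h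
    · left
      exact mem_hull3 _ _ _ _ (1 + x + y) (y - x) (-2*y) (by linarith) (by linarith)
        (by linarith) (by ring) (by simp [Prod.ext_iff]; constructor <;> ring)
    · right
      exact mem_hull3 _ _ _ _ (1 + x + y) (-2*x) (x - y) (by linarith) (by linarith)
        (by linarith) (by ring) (by simp [Prod.ext_iff]; constructor <;> ring)

lemma hBT : B3₁ ∪ B3₂ = T3 := by
  apply Subset.antisymm
  · apply union_subset
    · exact hull_subset_T3 (by rintro p (rfl | rfl | rfl) <;> constructor <;> norm_num)
    · exact hull_subset_T3 (by rintro p (rfl | rfl | rfl | rfl) <;> constructor <;> norm_num)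
  · rintro ⟨x, y⟩ ⟨hx, hy, hs⟩
    simp only [mem_setOf_eq] at hx hy hs
    rcases le_total (-(3/4)) (x + y) with h | h
    · left
      exact mem_hull3 _ _ _ _ (1 + (4/3)*(x+y)) (-(4/3)*x) (-(4/3)*y) (by linarith) (by linarith)
        (by linarith) (by ring) (by simp [Prod.ext_iff]; constructor <;> ring)
    · right
      have hsneg : x + y < 0 := by linarith
      have hsne : x + y ≠ 0 := ne_of_lt hsneg
      set s := x + y with hsdef
      have hβ0 : 0 ≤ x / s := div_nonneg_of_nonpos (by exact hx) (le_of_lt hsneg)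
      have hβ1 : 0 ≤ 1 - x / s := by
        have : 1 - x / s = y / s := by field_simp; ring
        rw [this]; exact div_nonneg_of_nonpos (by exact hy) (le_of_lt hsneg)
      have hα0 : (0:ℝ) ≤ -4*s - 3 := by linarith
      have hα1 : (0:ℝ) ≤ 1 - (-4*s - 3) := by linarith
      exact mem_hull4 _ _ _ _ _ ((-4*s-3) * (x/s)) ((1-(-4*s-3)) * (x/s))
        ((1-(-4*s-3)) * (1 - x/s)) ((-4*s-3) * (1 - x/s))
        (mul_nonneg hα0 hβ0) (mul_nonneg hα1 hβ0) (mul_nonneg hα1 hβ1) (mul_nonneg hα0 hβ1)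
        (by ring)
        (by
          simp only [Prod.ext_iff, Prod.fst_add, Prod.snd_add, Prod.smul_fst, Prod.smul_snd,
            smul_eq_mul]
          constructor <;> · field_simp; ring)

lemma hA1bd : ∀ p ∈ A3₁, -(1/2) ≤ p.2 := by
  intro p hp
  have : A3₁ ⊆ {q : ℝ × ℝ | -(1/2) ≤ q.2} := by
    apply convexHull_min
    · rintro q (rfl | rfl | rfl) <;> norm_num
    · intro x hx y hy a b ha hb hab
      simp only [mem_setOf_eq, Prod.snd_add, Prod.smul_snd, smul_eq_mul] at *
      nlinarith
  exact this hp

lemma hA2bd : ∀ p ∈ A3₂, -(1/2) ≤ p.1 := by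
  intro p hp
  have : A3₂ ⊆ {q : ℝ × ℝ | -(1/2) ≤ q.1} := by
    apply convexHull_min
    · rintro q (rfl | rfl | rfl) <;> norm_num
    · intro x hx y hy a b ha hb hab
      simp only [mem_setOf_eq, Prod.fst_add, Prod.smul_fst, smul_eq_mul] at *
      nlinarith
  exact this hp

/-- A₁ ∪ A₂ = B₁ ∪ B₂ (hence ≤_K^l holds for the unions),
    but B_i ⊄ A_j + K for all i, j, so ≤_K^L fails. -/
theorem stmt_3 :
    A3₁ ∪ A3₂ = B3₁ ∪ B3₂ ∧
    (B3₁ ∪ B3₂) ⊆ (A3₁ ∪ A3₂) + K3 ∧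
    ¬ B3₁ ⊆ A3₁ + K3 ∧ ¬ B3₁ ⊆ A3₂ + K3 ∧ ¬ B3₂ ⊆ A3₁ + K3 ∧ ¬ B3₂ ⊆ A3₂ + K3 := by
  have heq : A3₁ ∪ A3₂ = B3₁ ∪ B3₂ := by rw [hAT, hBT]
  have hyB1 : ((0:ℝ), -(3/4:ℝ)) ∈ B3₁ :=
    subset_convexHull ℝ _ (by right; right; rfl)
  have hyB2 : ((0:ℝ), -(1:ℝ)) ∈ B3₂ :=
    subset_convexHull ℝ _ (by right; right; right; rfl)
  have hxB1 : ((-(3/4:ℝ)), (0:ℝ)) ∈ B3₁ :=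
    subset_convexHull ℝ _ (by right; left; rfl)
  have hxB2 : ((-(3/4:ℝ)), (0:ℝ)) ∈ B3₂ :=
    subset_convexHull ℝ _ (by right; left; rfl)
  refine ⟨heq, ?_, ?_, ?_, ?_, ?_⟩
  · intro p hp
    rw [← heq] at hp
    have h0 : ((0:ℝ), (0:ℝ)) ∈ K3 := ⟨le_refl 0, le_refl 0⟩
    have := Set.add_mem_add hp h0
    rw [Prod.mk_zero_zero, add_zero] at this
    exact this
  · intro h
    obtain ⟨a, ha, k, hk, hak⟩ := h hyB1
    have h1 := hA1bd a ha
    have h2 := hk.2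
    have : a.2 + k.2 = -(3/4) := congrArg Prod.snd hak
    linarith
  · intro h
    obtain ⟨a, ha, k, hk, hak⟩ := h hxB1
    have h1 := hA2bd a ha
    have h2 := hk.1
    have : a.1 + k.1 = -(3/4) := congrArg Prod.fst hak
    linarith
  · intro h
    obtain ⟨a, ha, k, hk, hak⟩ := h hyB2
    have h1 := hA1bd a ha
    have h2 := hk.2
    have : a.2 + k.2 = -1 := congrArg Prod.snd hak
    linarith
  · intro h
    obtain ⟨a, ha, k, hk, hak⟩ := h hxB2
    have h1 := hA2bd a ha
    have h2 := hk.1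
    have : a.1 + k.1 = -(3/4) := congrArg Prod.fst hak
    linarith
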